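/- If G is a g-natural metric on the tangent bundle TM of a Riemannian manifold (M,g) of dimension at least 2, determined by functions a₁,a₂,a₃,b₁,b₂,b₃ : [0,∞) → ℝ, and one defines a(t) = a₁(t)(a₁(t)+a₃(t)) - a₂(t)², Fⱼ(t) = aⱼ(t) + t·bⱼ(t), and F(t) = F₁(t)(F₁(t)+F₃(t)) - F₂(t)², then at a point (x,u) with t = g(u,u), the symmetric bilinear form G_{(x,u)} on the 2n-dimensional space (decomposed into horizontal and vertical parts) is non-degenerate if and only if a(t) ≠ 0 and F(t) ≠ 0. -/
import Mathlib

open scoped RealInnerProductSpace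

/-- A singular symmetric 2×2 matrix has nonzero kernel. -/
lemma ker2_aux (A B C : ℝ) (h : A * C - B ^ 2 = 0) :
    ∃ x y : ℝ, ¬(x = 0 ∧ y = 0) ∧ A * x + B * y = 0 ∧ B * x + C * y = 0 := by
  by_cases hBC : B = 0 ∧ C = 0
  · exact ⟨0, 1, by simp, by simp [hBC.1], by simp [hBC.1, hBC.2]⟩
  · refine ⟨C, -B, ?_, by nlinarith, by ring⟩
    rintro ⟨h1, h2⟩
    exact hBC ⟨by linarith, h1⟩

/-- In dimension ≥ 2 there is a nonzero vector orthogonal to any given vector. -/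
lemma exists_perp_aux {n : ℕ} (hn : 2 ≤ n) (u : EuclideanSpace ℝ (Fin n)) :
    ∃ p : EuclideanSpace ℝ (Fin n), p ≠ 0 ∧ ⟪p, u⟫ = 0 := by
  have hr : Module.finrank ℝ (ℝ ∙ u) + Module.finrank ℝ (ℝ ∙ u)ᗮ
      = Module.finrank ℝ (EuclideanSpace ℝ (Fin n)) :=
    Submodule.finrank_add_finrank_orthogonal _
  have hdim : Module.finrank ℝ (EuclideanSpace ℝ (Fin n)) = n := by simp
  have h1 : Module.finrank ℝ (ℝ ∙ u) ≤ 1 := by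
    by_cases hu : u = 0
    · rw [hu, Submodule.span_zero_singleton, finrank_bot]; omega
    · rw [finrank_span_singleton hu]
  have hpos : 0 < Module.finrank ℝ (ℝ ∙ u)ᗮ := by omega
  obtain ⟨x, hx⟩ := Module.finrank_pos_iff_exists_ne_zero.mp hpos
  refine ⟨x.val, by simpa using hx, ?_⟩
  have := x.2 u (Submodule.mem_span_singleton_self u)
  rw [real_inner_comm]; exact this

theorem g_natural_metric_nondegenerate_iff
    (n : ℕ) (hn : 2 ≤ n)
    (a₁ a₂ a₃ b₁ b₂ b₃ : ℝ → ℝ)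
    (a : ℝ → ℝ) (ha : ∀ t, a t = a₁ t * (a₁ t + a₃ t) - (a₂ t) ^ 2)
    (F₁ F₂ F₃ : ℝ → ℝ)
    (hF₁ : ∀ t, F₁ t = a₁ t + t * b₁ t)
    (hF₂ : ∀ t, F₂ t = a₂ t + t * b₂ t)
    (hF₃ : ∀ t, F₃ t = a₃ t + t * b₃ t)
    (F : ℝ → ℝ) (hF : ∀ t, F t = F₁ t * (F₁ t + F₃ t) - (F₂ t) ^ 2)
    (u : EuclideanSpace ℝ (Fin n)) (t : ℝ) (ht : t = ⟪u, u⟫)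
    (G : (EuclideanSpace ℝ (Fin n) × EuclideanSpace ℝ (Fin n)) →
         (EuclideanSpace ℝ (Fin n) × EuclideanSpace ℝ (Fin n)) → ℝ)
    (hG : ∀ Z W, G Z W =
      (a₁ t + a₃ t) * ⟪Z.1, W.1⟫ + (b₁ t + b₃ t) * ⟪Z.1, u⟫ * ⟪W.1, u⟫
      + a₂ t * (⟪Z.1, W.2⟫ + ⟪Z.2, W.1⟫)
      + b₂ t * (⟪Z.1, u⟫ * ⟪W.2, u⟫ + ⟪Z.2, u⟫ * ⟪W.1, u⟫)
      + a₁ t * ⟪Z.2, W.2⟫ + b₁ t * ⟪Z.2, u⟫ * ⟪W.2, u⟫) :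
    (∀ Z, (∀ W, G Z W = 0) → Z = 0) ↔ (a t ≠ 0 ∧ F t ≠ 0) := by
  constructor
  · intro hnd
    -- first: a t ≠ 0
    have hA : a t ≠ 0 := by
      intro h0
      obtain ⟨p, hp, hpu⟩ := exists_perp_aux hn u
      obtain ⟨x, y, hxy, h1, h2⟩ :=
        ker2_aux (a₁ t + a₃ t) (a₂ t) (a₁ t) (by rw [ha] at h0; linarith)
      have hz : ((x • p, y • p) : _ × _) = 0 := by
        refine hnd _ ?_
        intro W
        rw [hG]
        simp only [real_inner_smul_left, hpu, mul_zero]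
        linear_combination ⟪p, W.1⟫ * h1 + ⟪p, W.2⟫ * h2
      rw [Prod.ext_iff] at hz
      rcases hz with ⟨hz1, hz2⟩
      exact hxy ⟨by
        by_contra hx0
        exact hp (by simpa [smul_eq_zero, hx0] using hz1), by
        by_contra hy0
        exact hp (by simpa [smul_eq_zero, hy0] using hz2)⟩
    refine ⟨hA, ?_⟩
    intro h0
    by_cases hu : u = 0
    · apply hA
      have ht0 : t = 0 := by simp [ht, hu]
      rw [ha, ht0]
      rw [hF, hF₁, hF₂, hF₃, ht0] at h0
      linarith [h0]
    · obtain ⟨x, y, hxy, h1, h2⟩ :=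
        ker2_aux (F₁ t + F₃ t) (F₂ t) (F₁ t) (by rw [hF] at h0; linarith)
      have hz : ((x • u, y • u) : _ × _) = 0 := by
        refine hnd _ ?_
        intro W
        rw [hG]
        simp only [real_inner_smul_left]
        rw [hF₁, hF₂, hF₃] at h1
        rw [hF₁, hF₂] at h2
        have hcu1 : ⟪u, W.1⟫ = ⟪W.1, u⟫ := real_inner_comm W.1 u
        have hcu2 : ⟪u, W.2⟫ = ⟪W.2, u⟫ := real_inner_comm W.2 u
        have htu : ⟪u, u⟫ = t := ht.symm
        rw [hcu1, hcu2, htu]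
        linear_combination ⟪W.1, u⟫ * h1 + ⟪W.2, u⟫ * h2
      rw [Prod.ext_iff] at hz
      rcases hz with ⟨hz1, hz2⟩
      exact hxy ⟨by
        by_contra hx0
        exact hu (by simpa [smul_eq_zero, hx0] using hz1), by
        by_contra hy0
        exact hu (by simpa [smul_eq_zero, hy0] using hz2)⟩
  · rintro ⟨hA, hFn⟩ Z hZ
    set s₁ := ⟪Z.1, u⟫ with hs₁
    set s₂ := ⟪Z.2, u⟫ with hs₂
    -- v1 = 0
    have hv1 : (a₁ t + a₃ t) • Z.1 + a₂ t • Z.2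
        + ((b₁ t + b₃ t) * s₁ + b₂ t * s₂) • u = 0 := by
      set v := (a₁ t + a₃ t) • Z.1 + a₂ t • Z.2
        + ((b₁ t + b₃ t) * s₁ + b₂ t * s₂) • u with hv
      have key : ∀ w, ⟪v, w⟫ = 0 := by
        intro w
        have h := hZ (w, 0)
        rw [hG] at h
        simp only [inner_zero_left, inner_zero_right] at h
        rw [hv]
        simp only [inner_add_left, real_inner_smul_left]
        rw [real_inner_comm w u]
        linear_combination h
      exact inner_self_eq_zero.mp (key v)
    have hv2 : a₂ t • Z.1 + a₁ t • Z.2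
        + (b₂ t * s₁ + b₁ t * s₂) • u = 0 := by
      set v := a₂ t • Z.1 + a₁ t • Z.2 + (b₂ t * s₁ + b₁ t * s₂) • u with hv
      have key : ∀ w, ⟪v, w⟫ = 0 := by
        intro w
        have h := hZ (0, w)
        rw [hG] at h
        simp only [inner_zero_left, inner_zero_right] at h
        rw [hv]
        simp only [inner_add_left, real_inner_smul_left]
        rw [real_inner_comm w u]
        linear_combination h
      exact inner_self_eq_zero.mp (key v)
    -- scalar equations from inner products with u
    have e1 : (F₁ t + F₃ t) * s₁ + F₂ t * s₂ = 0 := by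
      have := congrArg (fun v => ⟪v, u⟫) hv1
      simp only [inner_add_left, real_inner_smul_left, inner_zero_left, ← ht] at this
      rw [hF₁, hF₂, hF₃]
      linear_combination this
    have e2 : F₂ t * s₁ + F₁ t * s₂ = 0 := by
      have := congrArg (fun v => ⟪v, u⟫) hv2
      simp only [inner_add_left, real_inner_smul_left, inner_zero_left, ← ht] at this
      rw [hF₁, hF₂]
      linear_combination this
    have hs10 : s₁ = 0 := by
      have : F t * s₁ = 0 := by
        rw [hF]; linear_combination F₁ t * e1 - F₂ t * e2
      exact (mul_eq_zero.mp this).resolve_left hFn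
    have hs20 : s₂ = 0 := by
      have : F t * s₂ = 0 := by
        rw [hF]; linear_combination (F₁ t + F₃ t) * e2 - F₂ t * e1
      exact (mul_eq_zero.mp this).resolve_left hFn
    rw [hs10, hs20] at hv1 hv2
    simp only [mul_zero, add_zero, zero_smul] at hv1 hv2
    have hZ1 : a t • Z.1 = 0 := by
      have : a t • Z.1 = a₁ t • ((a₁ t + a₃ t) • Z.1 + a₂ t • Z.2)
          - a₂ t • (a₂ t • Z.1 + a₁ t • Z.2) := by
        rw [ha]; module
      rw [this, hv1, hv2]; simp
    have hZ2 : a t • Z.2 = 0 := by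
      have : a t • Z.2 = (a₁ t + a₃ t) • (a₂ t • Z.1 + a₁ t • Z.2)
          - a₂ t • ((a₁ t + a₃ t) • Z.1 + a₂ t • Z.2) := by
        rw [ha]; module
      rw [this, hv1, hv2]; simp
    have h1 : Z.1 = 0 := by
      rcases smul_eq_zero.mp hZ1 with h | h
      · exact absurd h hA
      · exact h
    have h2 : Z.2 = 0 := by
      rcases smul_eq_zero.mp hZ2 with h | h
      · exact absurd h hA
      · exact h
    exact Prod.ext h1 h2
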